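/- Let P be a joint probability mass function on a finite set J × Y whose marginal on J is uniform, with |J| = M ≥ 1. Define the optimal guessing probability p_s := ∑_{y∈Y} max_{j∈J} P(j,y). Then p_s ≥ 2^{I(J;Y) − log₂ M}, where I(J;Y) = H(J) + H(Y) − H(J,Y) is the mutual information of P. -/

import Mathlib

open Finset
open scoped Classical

/-- Shannon entropy (base 2) of a vector of reals, with the convention `0 · log₂ 0 = 0`. -/
noncomputable def shEntropy {α : Type*} [Fintype α] (q : α → ℝ) : ℝ :=
  -∑ a, q a * Real.logb 2 (q a)

/-- Mutual information `I(J;Y) = H(J) + H(Y) − H(J,Y)` of a joint pmf on `J × Y`. -/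
noncomputable def miJoint {J Y : Type*} [Fintype J] [Fintype Y] (P : J × Y → ℝ) : ℝ :=
  shEntropy (fun j => ∑ y, P (j, y)) + shEntropy (fun y => ∑ j, P (j, y)) - shEntropy P

/-- Reverse Fano inequality: if the marginal of the joint pmf `P` on `J` is uniform with
`|J| = M ≥ 1`, then the optimal guessing probability `p_s = ∑_y max_j P(j,y)` satisfies
`p_s ≥ 2^(I(J;Y) − log₂ M)`. -/
theorem reverse_fano {J Y : Type*} [Fintype J] [Fintype Y] [Nonempty J]
    (M : ℕ) (hM : 1 ≤ M) (hcard : Fintype.card J = M)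
    (P : J × Y → ℝ) (hP0 : ∀ jy, 0 ≤ P jy) (hP1 : ∑ jy, P jy = 1)
    (hunif : ∀ j, ∑ y, P (j, y) = 1 / M) :
    (2 : ℝ) ^ (miJoint P - Real.logb 2 M) ≤ ∑ y, ⨆ j, P (j, y) := by
  have hM0 : (0:ℝ) < M := by exact_mod_cast hM
  classical
  set q : Y → ℝ := fun y => ∑ j, P (j, y) with hq
  set m : Y → ℝ := fun y => ⨆ j, P (j, y) with hmdef
  set p : ℝ := ∑ y, m y with hpdef
  have hbdd : ∀ y : Y, BddAbove (Set.range fun j => P (j, y)) :=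
    fun y => (Set.finite_range _).bddAbove
  have hPle : ∀ j y, P (j, y) ≤ m y := fun j y => le_ciSup (hbdd y) j
  have hq0 : ∀ y, 0 ≤ q y := fun y => Finset.sum_nonneg fun j _ => hP0 _
  have hmq : ∀ y, m y ≤ q y := fun y => ciSup_le fun j =>
    Finset.single_le_sum (fun i _ => hP0 (i, y)) (mem_univ j)
  have hm0 : ∀ y, 0 ≤ m y := fun y =>
    le_trans (hP0 (Classical.arbitrary J, y)) (hPle _ y)
  have hqsum : ∑ y, q y = 1 := by
    rw [hq, Finset.sum_comm, ← Fintype.sum_prod_type, hP1]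
  have hp0 : 0 ≤ p := Finset.sum_nonneg fun y _ => hm0 y
  have hppos : 0 < p := by
    rcases hp0.lt_or_eq with h | h
    · exact h
    · exfalso
      have hz : ∀ y, m y = 0 := fun y =>
        (Finset.sum_eq_zero_iff_of_nonneg (fun y _ => hm0 y)).mp h.symm y (mem_univ y)
      have : ∑ jy, P jy = 0 := Finset.sum_eq_zero fun jy _ =>
        le_antisymm (by simpa [hz jy.2] using hPle jy.1 jy.2) (hP0 jy)
      rw [hP1] at this; norm_num at this
  -- H(J) = log M
  have hHJ : shEntropy (fun j => ∑ y, P (j, y)) = Real.logb 2 M := by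
    unfold shEntropy
    simp only [hunif]
    rw [Finset.sum_const, card_univ, hcard, nsmul_eq_mul, one_div, Real.logb_inv]
    field_simp
  -- step 1
  have step1 : ∑ jy, P jy * Real.logb 2 (P jy) ≤ ∑ y, q y * Real.logb 2 (m y) := by
    rw [Fintype.sum_prod_type, Finset.sum_comm]
    apply Finset.sum_le_sum
    intro y _
    rw [hq]
    simp only [Finset.sum_mul]
    apply Finset.sum_le_sum
    intro j _
    rcases eq_or_lt_of_le (hP0 (j, y)) with h0 | h0
    · simp [← h0]
    · exact mul_le_mul_of_nonneg_left
        ((Real.logb_le_logb one_lt_two h0 (lt_of_lt_of_le h0 (hPle j y))).mpr (hPle j y))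
        h0.le
  -- step 2 pointwise
  have hlog2 : 0 < Real.log 2 := Real.log_pos one_lt_two
  have hpt : ∀ y, q y * Real.logb 2 (m y) - q y * Real.logb 2 (q y) - q y * Real.logb 2 p
      ≤ (m y / p - q y) / Real.log 2 := by
    intro y
    rcases eq_or_lt_of_le (hq0 y) with h0 | h0
    · have hmz : m y = 0 := le_antisymm (h0 ▸ hmq y) (hm0 y)
      simp [← h0, hmz]
    · have hqm : q y ≤ M * m y := by
        calc q y ≤ ∑ _j : J, m y := Finset.sum_le_sum fun j _ => hPle j y
          _ = M * m y := by rw [Finset.sum_const, card_univ, hcard, nsmul_eq_mul]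
      have hmpos : 0 < m y := by nlinarith
      have e1 : Real.logb 2 (m y) - Real.logb 2 (q y) - Real.logb 2 p
          = Real.log (m y / (q y * p)) / Real.log 2 := by
        rw [Real.log_div hmpos.ne' (mul_ne_zero h0.ne' hppos.ne'),
          Real.log_mul h0.ne' hppos.ne']
        simp only [Real.logb]
        ring
      have e2 : Real.log (m y / (q y * p)) ≤ m y / (q y * p) - 1 :=
        Real.log_le_sub_one_of_pos (by positivity)
      calc q y * Real.logb 2 (m y) - q y * Real.logb 2 (q y) - q y * Real.logb 2 p
          = q y * (Real.log (m y / (q y * p)) / Real.log 2) := by rw [← e1]; ring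
        _ ≤ q y * ((m y / (q y * p) - 1) / Real.log 2) := by gcongr
        _ = (m y / p - q y) / Real.log 2 := by field_simp
  -- step 2
  have step2 : ∑ y, (q y * Real.logb 2 (m y) - q y * Real.logb 2 (q y)) ≤ Real.logb 2 p := by
    have hsum : ∑ y, (m y / p - q y) / Real.log 2 = 0 := by
      rw [← Finset.sum_div, Finset.sum_sub_distrib, ← Finset.sum_div, ← hpdef, hqsum]
      field_simp
      ring
    have h1 := Finset.sum_le_sum (fun y (_ : y ∈ univ) => hpt y)
    rw [hsum] at h1
    have hdist : ∑ y, (q y * Real.logb 2 (m y) - q y * Real.logb 2 (q y) - q y * Real.logb 2 p)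
        = ∑ y, (q y * Real.logb 2 (m y) - q y * Real.logb 2 (q y)) - Real.logb 2 p := by
      rw [Finset.sum_sub_distrib, ← Finset.sum_mul, hqsum, one_mul]
    rw [hdist] at h1
    linarith
  -- combine
  have key : miJoint P - Real.logb 2 M ≤ Real.logb 2 p := by
    unfold miJoint
    rw [hHJ, ← hq]
    unfold shEntropy
    have hs : ∑ y, (q y * Real.logb 2 (m y) - q y * Real.logb 2 (q y))
        = ∑ y, q y * Real.logb 2 (m y) - ∑ y, q y * Real.logb 2 (q y) :=
      Finset.sum_sub_distrib _ _
    linarith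
  calc (2:ℝ) ^ (miJoint P - Real.logb 2 M) ≤ (2:ℝ) ^ Real.logb 2 p :=
      Real.rpow_le_rpow_of_exponent_le one_le_two key
    _ = p := Real.rpow_logb two_pos (by norm_num) hppos
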